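/- For the mean-squared CCA similarity ρ_CCA(φ,ψ) = tr(Σ_φ⁻¹Σ_{φψ}Σ_ψ⁻¹Σ_{ψφ})/k between two centered representation maps φ, ψ: R^d → R^k with invertible covariances, the identity ρ_CCA(φ,ψ) = 1 − (1/2k) E[(φ(X)ᵀΣ_φ⁻¹φ(X′) − ψ(X)ᵀΣ_ψ⁻¹ψ(X′))²] holds, where X′ is an independent copy of X. -/

import Mathlib

open MeasureTheory Matrix

set_option linter.unusedSectionVars false

section Aux

variable {Ω : Type*} [MeasurableSpace Ω] {μ : Measure Ω} [IsProbabilityMeasure μ]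

private lemma memLp_mul_integrable {f g : Ω → ℝ} (hf : MemLp f 2 μ) (hg : MemLp g 2 μ) :
    Integrable (fun x => f x * g x) μ := by
  have h1 : Integrable (fun x => (f x + g x) ^ 2) μ := (hf.add hg).integrable_sq
  have h2 : Integrable (fun x => f x ^ 2) μ := hf.integrable_sq
  have h3 : Integrable (fun x => g x ^ 2) μ := hg.integrable_sq
  have : Integrable (fun x => (((f x + g x) ^ 2 - f x ^ 2) - g x ^ 2) / 2) μ :=
    ((h1.sub h2).sub h3).div_const 2
  convert this using 2 with x
  ring

variable {k : ℕ}

private lemma sum4 (f : Fin k → Fin k → Fin k → Fin k → ℝ) :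
    ∑ i, ∑ i', ∑ j, ∑ j', f i i' j j' = ∑ j, ∑ j', ∑ i', ∑ i, f i i' j j' :=
  calc ∑ i, ∑ i', ∑ j, ∑ j', f i i' j j'
      = ∑ i, ∑ j, ∑ i', ∑ j', f i i' j j' :=
        Finset.sum_congr rfl fun i _ => Finset.sum_comm
    _ = ∑ j, ∑ i, ∑ i', ∑ j', f i i' j j' := Finset.sum_comm
    _ = ∑ j, ∑ i, ∑ j', ∑ i', f i i' j j' :=
        Finset.sum_congr rfl fun j _ => Finset.sum_congr rfl fun i _ => Finset.sum_comm
    _ = ∑ j, ∑ j', ∑ i, ∑ i', f i i' j j' :=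
        Finset.sum_congr rfl fun j _ => Finset.sum_comm
    _ = ∑ j, ∑ j', ∑ i', ∑ i, f i i' j j' :=
        Finset.sum_congr rfl fun j _ => Finset.sum_congr rfl fun j' _ => Finset.sum_comm

/-- The pointwise expansion of a product of two bilinear forms. -/
private lemma expand_point (M N : Matrix (Fin k) (Fin k) ℝ) (F G F' G' : Fin k → ℝ) :
    ((fun i => F i) ⬝ᵥ (M *ᵥ fun j => F' j)) * ((fun i => G i) ⬝ᵥ (N *ᵥ fun j => G' j))
      = ∑ q : (Fin k × Fin k) × Fin k × Fin k,
          (M q.1.1 q.2.1 * N q.1.2 q.2.2) * ((F q.1.1 * G q.1.2) * (F' q.2.1 * G' q.2.2)) := by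
  rw [Fintype.sum_prod_type]
  simp only [Fintype.sum_prod_type, dotProduct, Matrix.mulVec]
  rw [Finset.sum_mul_sum]
  refine Finset.sum_congr rfl fun i _ => Finset.sum_congr rfl fun i' _ => ?_
  simp only [Finset.mul_sum, Finset.sum_mul]
  rw [Finset.sum_comm]
  exact Finset.sum_congr rfl fun j _ => Finset.sum_congr rfl fun j' _ => by ring

private lemma sum_eq_trace (M N C D : Matrix (Fin k) (Fin k) ℝ) :
    ∑ q : (Fin k × Fin k) × Fin k × Fin k,
        (M q.1.1 q.2.1 * N q.1.2 q.2.2) * (C q.1.1 q.1.2 * D q.2.1 q.2.2)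
      = Matrix.trace (Mᵀ * C * N * Dᵀ) := by
  rw [Fintype.sum_prod_type]
  simp only [Fintype.sum_prod_type]
  rw [sum4 (fun i i' j j' => (M i j * N i' j') * (C i i' * D j j'))]
  simp only [Matrix.trace, Matrix.diag_apply, Matrix.mul_apply, Matrix.transpose_apply,
    Finset.sum_mul]
  refine Finset.sum_congr rfl fun j _ => Finset.sum_congr rfl fun j' _ =>
    Finset.sum_congr rfl fun i' _ => Finset.sum_congr rfl fun i _ => by ring

private lemma master (M N : Matrix (Fin k) (Fin k) ℝ) (F G : Fin k → Ω → ℝ)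
    (hF : ∀ i, MemLp (F i) 2 μ) (hG : ∀ i, MemLp (G i) 2 μ) :
    Integrable (fun p : Ω × Ω =>
        ((fun i => F i p.1) ⬝ᵥ (M *ᵥ fun j => F j p.2)) *
        ((fun i => G i p.1) ⬝ᵥ (N *ᵥ fun j => G j p.2))) (μ.prod μ)
      ∧ ∫ p : Ω × Ω,
          ((fun i => F i p.1) ⬝ᵥ (M *ᵥ fun j => F j p.2)) *
          ((fun i => G i p.1) ⬝ᵥ (N *ᵥ fun j => G j p.2)) ∂(μ.prod μ)
        = Matrix.trace (Mᵀ * (Matrix.of fun i i' => ∫ ω, F i ω * G i' ω ∂μ) * N *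
            (Matrix.of fun j j' => ∫ ω, F j ω * G j' ω ∂μ)ᵀ) := by
  have hterm : ∀ q : (Fin k × Fin k) × Fin k × Fin k,
      Integrable (fun p : Ω × Ω => (M q.1.1 q.2.1 * N q.1.2 q.2.2) *
        ((F q.1.1 p.1 * G q.1.2 p.1) * (F q.2.1 p.2 * G q.2.2 p.2))) (μ.prod μ) := by
    intro q
    exact ((memLp_mul_integrable (hF q.1.1) (hG q.1.2)).mul_prod
      (memLp_mul_integrable (hF q.2.1) (hG q.2.2))).const_mul _
  have heq : (fun p : Ω × Ω =>
      ((fun i => F i p.1) ⬝ᵥ (M *ᵥ fun j => F j p.2)) *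
      ((fun i => G i p.1) ⬝ᵥ (N *ᵥ fun j => G j p.2)))
      = fun p : Ω × Ω => ∑ q : (Fin k × Fin k) × Fin k × Fin k,
          (M q.1.1 q.2.1 * N q.1.2 q.2.2) *
          ((F q.1.1 p.1 * G q.1.2 p.1) * (F q.2.1 p.2 * G q.2.2 p.2)) := by
    funext p
    exact expand_point M N (fun i => F i p.1) (fun i => G i p.1) (fun j => F j p.2)
      (fun j => G j p.2)
  constructor
  · rw [heq]
    exact integrable_finset_sum _ fun q _ => hterm q
  · rw [heq, integral_finset_sum _ fun q _ => hterm q]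
    rw [← sum_eq_trace M N (Matrix.of fun i i' => ∫ ω, F i ω * G i' ω ∂μ)
      (Matrix.of fun j j' => ∫ ω, F j ω * G j' ω ∂μ)]
    refine Finset.sum_congr rfl fun q _ => ?_
    rw [integral_const_mul,
      integral_prod_mul (fun x => F q.1.1 x * G q.1.2 x) (fun x => F q.2.1 x * G q.2.2 x)]
    simp [Matrix.of_apply]

end Aux

/-- The mean-squared CCA similarity `tr(Σ_φ⁻¹Σ_{φψ}Σ_ψ⁻¹Σ_{ψφ})/k` equals
`1 − (1/2k) E[(φ(X)ᵀΣ_φ⁻¹φ(X′) − ψ(X)ᵀΣ_ψ⁻¹ψ(X′))²]`. -/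
theorem stmt12 {Ω : Type*} [MeasurableSpace Ω] (μ : Measure Ω) [IsProbabilityMeasure μ]
    {d k : ℕ} (hk : 0 < k) (X : Ω → (Fin d → ℝ))
    (φ ψ : (Fin d → ℝ) → (Fin k → ℝ))
    (hmeasφ : Measurable fun ω => φ (X ω)) (hmeasψ : Measurable fun ω => ψ (X ω))
    (hL2φ : ∀ i, MemLp (fun ω => φ (X ω) i) 2 μ)
    (hL2ψ : ∀ i, MemLp (fun ω => ψ (X ω) i) 2 μ)
    (hcentφ : ∀ i, ∫ ω, φ (X ω) i ∂μ = 0) (hcentψ : ∀ i, ∫ ω, ψ (X ω) i ∂μ = 0)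
    (Sφ Sψ Sφψ : Matrix (Fin k) (Fin k) ℝ)
    (hSφ : Sφ = Matrix.of fun i j => ∫ ω, φ (X ω) i * φ (X ω) j ∂μ)
    (hSψ : Sψ = Matrix.of fun i j => ∫ ω, ψ (X ω) i * ψ (X ω) j ∂μ)
    (hSφψ : Sφψ = Matrix.of fun i j => ∫ ω, φ (X ω) i * ψ (X ω) j ∂μ)
    (hinvφ : IsUnit Sφ.det) (hinvψ : IsUnit Sψ.det) :
    Matrix.trace (Sφ⁻¹ * Sφψ * Sψ⁻¹ * Sφψᵀ) / (k : ℝ)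
      = 1 - (1 / (2 * (k : ℝ))) *
          ∫ p : Ω × Ω,
            (φ (X p.1) ⬝ᵥ (Sφ⁻¹ *ᵥ φ (X p.2)) - ψ (X p.1) ⬝ᵥ (Sψ⁻¹ *ᵥ ψ (X p.2))) ^ 2
            ∂(μ.prod μ) := by
  set F : Fin k → Ω → ℝ := fun i ω => φ (X ω) i with hF
  set G : Fin k → Ω → ℝ := fun i ω => ψ (X ω) i with hG
  have hSφsymm : Sφᵀ = Sφ := by
    rw [hSφ]; ext i j; simp only [Matrix.transpose_apply, Matrix.of_apply]
    congr 1; funext ω; ring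
  have hSψsymm : Sψᵀ = Sψ := by
    rw [hSψ]; ext i j; simp only [Matrix.transpose_apply, Matrix.of_apply]
    congr 1; funext ω; ring
  have hMsymm : (Sφ⁻¹)ᵀ = Sφ⁻¹ := by rw [Matrix.transpose_nonsing_inv, hSφsymm]
  have hNsymm : (Sψ⁻¹)ᵀ = Sψ⁻¹ := by rw [Matrix.transpose_nonsing_inv, hSψsymm]
  have hMinv : Sφ⁻¹ * Sφ = 1 := Matrix.nonsing_inv_mul _ hinvφ
  have hNinv : Sψ⁻¹ * Sψ = 1 := Matrix.nonsing_inv_mul _ hinvψ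
  have hAA := master (μ := μ) Sφ⁻¹ Sφ⁻¹ F F hL2φ hL2φ
  have hAB := master (μ := μ) Sφ⁻¹ Sψ⁻¹ F G hL2φ hL2ψ
  have hBB := master (μ := μ) Sψ⁻¹ Sψ⁻¹ G G hL2ψ hL2ψ
  have hCφ : (Matrix.of fun i i' => ∫ ω, F i ω * F i' ω ∂μ) = Sφ := by rw [hSφ]
  have hCψ : (Matrix.of fun i i' => ∫ ω, G i ω * G i' ω ∂μ) = Sψ := by rw [hSψ]
  have hCφψ : (Matrix.of fun i i' => ∫ ω, F i ω * G i' ω ∂μ) = Sφψ := by rw [hSφψ]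
  rw [hCφ] at hAA
  rw [hCφψ] at hAB
  rw [hCψ] at hBB
  set a : Ω × Ω → ℝ := fun p => φ (X p.1) ⬝ᵥ (Sφ⁻¹ *ᵥ φ (X p.2)) with ha
  set b : Ω × Ω → ℝ := fun p => ψ (X p.1) ⬝ᵥ (Sψ⁻¹ *ᵥ ψ (X p.2)) with hb
  have haa : (fun p : Ω × Ω => a p * a p) = fun p : Ω × Ω =>
      ((fun i => F i p.1) ⬝ᵥ (Sφ⁻¹ *ᵥ fun j => F j p.2)) *
      ((fun i => F i p.1) ⬝ᵥ (Sφ⁻¹ *ᵥ fun j => F j p.2)) := rfl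
  have hab : (fun p : Ω × Ω => a p * b p) = fun p : Ω × Ω =>
      ((fun i => F i p.1) ⬝ᵥ (Sφ⁻¹ *ᵥ fun j => F j p.2)) *
      ((fun i => G i p.1) ⬝ᵥ (Sψ⁻¹ *ᵥ fun j => G j p.2)) := rfl
  have hbb : (fun p : Ω × Ω => b p * b p) = fun p : Ω × Ω =>
      ((fun i => G i p.1) ⬝ᵥ (Sψ⁻¹ *ᵥ fun j => G j p.2)) *
      ((fun i => G i p.1) ⬝ᵥ (Sψ⁻¹ *ᵥ fun j => G j p.2)) := rfl
  have hIaa : Integrable (fun p : Ω × Ω => a p * a p) (μ.prod μ) := by rw [haa]; exact hAA.1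
  have hIab : Integrable (fun p : Ω × Ω => a p * b p) (μ.prod μ) := by rw [hab]; exact hAB.1
  have hIbb : Integrable (fun p : Ω × Ω => b p * b p) (μ.prod μ) := by rw [hbb]; exact hBB.1
  have hVaa : ∫ p : Ω × Ω, a p * a p ∂(μ.prod μ) = (k : ℝ) := by
    rw [haa, hAA.2, hMsymm, hSφsymm, Matrix.mul_assoc (Sφ⁻¹ * Sφ) Sφ⁻¹ Sφ, hMinv, one_mul,
      Matrix.trace_one]
    simp
  have hVbb : ∫ p : Ω × Ω, b p * b p ∂(μ.prod μ) = (k : ℝ) := by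
    rw [hbb, hBB.2, hNsymm, hSψsymm, Matrix.mul_assoc (Sψ⁻¹ * Sψ) Sψ⁻¹ Sψ, hNinv, one_mul,
      Matrix.trace_one]
    simp
  have hVab : ∫ p : Ω × Ω, a p * b p ∂(μ.prod μ)
      = Matrix.trace (Sφ⁻¹ * Sφψ * Sψ⁻¹ * Sφψᵀ) := by
    rw [hab, hAB.2, hMsymm]
  have hsq : (fun p : Ω × Ω => (a p - b p) ^ 2)
      = fun p : Ω × Ω => a p * a p - 2 * (a p * b p) + b p * b p := by
    funext p; ring
  have h1 : Integrable (fun p : Ω × Ω => a p * a p - 2 * (a p * b p)) (μ.prod μ) := by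
    exact hIaa.sub (hIab.const_mul 2)
  have h2 : Integrable (fun p : Ω × Ω => 2 * (a p * b p)) (μ.prod μ) := by
    exact hIab.const_mul 2
  have hint : ∫ p : Ω × Ω, (a p - b p) ^ 2 ∂(μ.prod μ)
      = 2 * (k : ℝ) - 2 * Matrix.trace (Sφ⁻¹ * Sφψ * Sψ⁻¹ * Sφψᵀ) := by
    rw [hsq, integral_add h1 hIbb, integral_sub hIaa h2, integral_const_mul, hVaa, hVbb, hVab]
    ring
  rw [hint]
  have hk0 : (k : ℝ) ≠ 0 := Nat.cast_ne_zero.mpr hk.ne'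
  field_simp
  ring
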